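/- Let s > 0, N ≥ 2, η > 0, and |z|_η := max(|z|, η). Let v : ℝᵈ → ℝ satisfy the self-consistent equation v(r₁) = sup over (r₂,...,r_N) of { -Σ_{i=2}^N v(rᵢ) - Σ_{1≤i<j≤N} |rᵢ - rⱼ|_η^{-s} }. Then for any fixed points r̄₂, ..., r̄_N ∈ ℝᵈ such that Σ_{2≤i<j≤N} |r̄ᵢ - r̄ⱼ|_η^{-s} + Σ_{i=2}^N v(r̄ᵢ) = E_N(v), one has for all r ∈ ℝᵈ: v(r) - E_N(v) ≥ -Σ_{i=2}^N |r - r̄ᵢ|_η^{-s}, and consequently v(r) - E_N(v) ≥ -(N-1)/|r|^s + o(|r|^{-s}) as |r| → ∞. -/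

import Mathlib

open Filter Finset

noncomputable def energyEta (d K : ℕ) (s η : ℝ)
    (v : EuclideanSpace ℝ (Fin d) → ℝ) (r : Fin K → EuclideanSpace ℝ (Fin d)) : ℝ :=
  (∑ i : Fin K, ∑ j ∈ univ.filter (fun j => i < j), (max ‖r i - r j‖ η) ^ (-s)) +
    ∑ i : Fin K, v (r i)

lemma energy_cons (d n : ℕ) (s η : ℝ) (v : EuclideanSpace ℝ (Fin d) → ℝ)
    (r₁ : EuclideanSpace ℝ (Fin d)) (q : Fin n → EuclideanSpace ℝ (Fin d)) :
    energyEta d (n+1) s η v (Fin.cons r₁ q) =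
      ((∑ i : Fin n, ∑ j ∈ univ.filter (fun j => i < j), (max ‖q i - q j‖ η) ^ (-s)) +
        ∑ i : Fin n, v (q i)) +
      ((∑ i : Fin n, (max ‖r₁ - q i‖ η) ^ (-s)) + v r₁) := by
  simp only [energyEta, Finset.sum_filter, Fin.sum_univ_succ, Fin.cons_zero, Fin.cons_succ,
    Fin.succ_lt_succ_iff, Fin.succ_pos, Fin.lt_irrefl, Fin.not_lt_zero, if_true, if_false,
    ite_true, ite_false]
  ring

theorem stmt11 (d N : ℕ) (hN : 2 ≤ N) (s η : ℝ) (hs : 0 < s) (hη : 0 < η)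
    (v : EuclideanSpace ℝ (Fin d) → ℝ)
    (hself : ∀ r₁ : EuclideanSpace ℝ (Fin d),
      v r₁ = ⨆ q : Fin (N - 1) → EuclideanSpace ℝ (Fin d),
        (- (∑ i : Fin (N - 1), v (q i))
          - ((∑ i : Fin (N - 1), (max ‖r₁ - q i‖ η) ^ (-s)) +
             ∑ i : Fin (N - 1), ∑ j ∈ univ.filter (fun j => i < j),
               (max ‖q i - q j‖ η) ^ (-s))))
    (rbar : Fin (N - 1) → EuclideanSpace ℝ (Fin d))
    (hE : (∑ i : Fin (N - 1), ∑ j ∈ univ.filter (fun j => i < j),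
            (max ‖rbar i - rbar j‖ η) ^ (-s)) + ∑ i : Fin (N - 1), v (rbar i)
          = ⨅ r : Fin N → EuclideanSpace ℝ (Fin d), energyEta d N s η v r) :
    (∀ r : EuclideanSpace ℝ (Fin d),
      - ∑ i : Fin (N - 1), (max ‖r - rbar i‖ η) ^ (-s) ≤
        v r - ⨅ r' : Fin N → EuclideanSpace ℝ (Fin d), energyEta d N s η v r') ∧
    (∀ ε : ℝ, 0 < ε →
      ∀ᶠ r : EuclideanSpace ℝ (Fin d) in
          comap (fun r : EuclideanSpace ℝ (Fin d) => ‖r‖) atTop,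
        -(((N : ℝ) - 1) + ε) / ‖r‖ ^ s ≤
          v r - ⨅ r' : Fin N → EuclideanSpace ℝ (Fin d), energyEta d N s η v r') := by
  obtain ⟨n, rfl⟩ : ∃ n, N = n + 1 := ⟨N - 1, by omega⟩
  have hn : 1 ≤ n := by omega
  set E : ℝ := ⨅ r' : Fin (n+1) → EuclideanSpace ℝ (Fin d), energyEta d (n+1) s η v r'
    with hEdef
  set f : EuclideanSpace ℝ (Fin d) → (Fin n → EuclideanSpace ℝ (Fin d)) → ℝ := fun r₁ q =>
    - (∑ i : Fin n, v (q i))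
      - ((∑ i : Fin n, (max ‖r₁ - q i‖ η) ^ (-s)) +
         ∑ i : Fin n, ∑ j ∈ univ.filter (fun j => i < j),
           (max ‖q i - q j‖ η) ^ (-s)) with hf
  have hself' : ∀ r₁ : EuclideanSpace ℝ (Fin d),
      v r₁ = ⨆ q : Fin n → EuclideanSpace ℝ (Fin d), f r₁ q := hself
  have hcons : ∀ (r₁ : EuclideanSpace ℝ (Fin d)) (q : Fin n → EuclideanSpace ℝ (Fin d)),
      energyEta d (n+1) s η v (Fin.cons r₁ q) = v r₁ - f r₁ q := by
    intro r₁ q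
    rw [energy_cons]
    simp only [hf]
    ring
  set e : ℝ := (∑ i : Fin n, ∑ j ∈ univ.filter (fun j => i < j),
      (max ‖rbar i - rbar j‖ η) ^ (-s)) + ∑ i : Fin n, v (rbar i) with he
  have hE' : e = E := hE
  have hfrbar : ∀ r : EuclideanSpace ℝ (Fin d),
      f r rbar = - e - ∑ i : Fin n, (max ‖r - rbar i‖ η) ^ (-s) := by
    intro r; simp only [hf, he]; ring
  have part1 : ∀ r : EuclideanSpace ℝ (Fin d),
      - ∑ i : Fin n, (max ‖r - rbar i‖ η) ^ (-s) ≤ v r - E := by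
    intro r
    set e1 : ℝ := ∑ i : Fin n, (max ‖r - rbar i‖ η) ^ (-s) with he1def
    have he1 : 0 ≤ e1 := Finset.sum_nonneg fun i _ =>
      (Real.rpow_pos_of_pos (lt_max_of_lt_right hη) _).le
    by_cases hbdd : BddBelow (Set.range (energyEta d (n+1) s η v))
    · have hE0 : E ≤ 0 := by
        have h0 : ∀ q : Fin n → EuclideanSpace ℝ (Fin d), E ≤ v 0 - f 0 q := by
          intro q
          rw [← hcons]
          exact ciInf_le hbdd _
        have hSb : BddAbove (Set.range (f 0)) := by
          obtain ⟨c, hc⟩ := hbdd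
          refine ⟨v 0 - c, ?_⟩
          rintro x ⟨q, rfl⟩
          have h1 := hc (Set.mem_range_self (Fin.cons (0 : EuclideanSpace ℝ (Fin d)) q))
          rw [hcons] at h1
          linarith
        by_contra hpos
        push_neg at hpos
        have hlt : v (0 : EuclideanSpace ℝ (Fin d)) - E / 2
            < ⨆ q : Fin n → EuclideanSpace ℝ (Fin d), f 0 q := by
          rw [← hself']; linarith
        obtain ⟨q, hq⟩ := exists_lt_of_lt_ciSup hlt
        have hq' : v (0 : EuclideanSpace ℝ (Fin d)) - E / 2 < f 0 q := hq
        have h7 := h0 q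
        clear_value E f e e1
        linarith only [hq', h7, hpos]
      have h2 : E ≤ energyEta d (n+1) s η v (Fin.cons r rbar) := ciInf_le hbdd _
      rw [hcons, hfrbar, hE'] at h2
      linarith
    · have hE0 : E = 0 := Real.iInf_of_not_bddBelow hbdd
      have he0 : e = 0 := by rw [hE', hE0]
      by_cases hS : BddAbove (Set.range (f r))
      · have hle : f r rbar ≤ v r := by
          rw [hself']; exact le_ciSup hS rbar
        rw [hfrbar] at hle
        rw [hE0]
        linarith
      · have hv0 : v r = 0 := by rw [hself']; exact Real.iSup_of_not_bddAbove hS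
        rw [hE0, hv0]
        linarith
  constructor
  · exact part1
  · intro ε hε
    rw [eventually_comap]
    set M : ℝ := ∑ i : Fin n, ‖rbar i‖ with hM
    have hMi : ∀ i : Fin n, ‖rbar i‖ ≤ M :=
      fun i => Finset.single_le_sum (fun j _ => norm_nonneg (rbar j)) (mem_univ i)
    have hM0 : 0 ≤ M := Finset.sum_nonneg fun i _ => norm_nonneg _
    have hnpos : (0 : ℝ) < n := by exact_mod_cast Nat.lt_of_lt_of_le Nat.zero_lt_one hn
    have hc : (n : ℝ) / ((n : ℝ) + ε) < 1 := by
      rw [div_lt_one (by linarith)]; linarith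
    have htend : Tendsto (fun t : ℝ => ((t - M) / t) ^ s) atTop (nhds 1) := by
      have h1 : Tendsto (fun t : ℝ => (t - M) / t) atTop (nhds 1) := by
        have h2 : ∀ᶠ t : ℝ in atTop, 1 - M * t⁻¹ = (t - M) / t := by
          filter_upwards [eventually_gt_atTop (0 : ℝ)] with t ht
          field_simp
        refine Tendsto.congr' h2 ?_
        have h3 := ((tendsto_inv_atTop_zero (𝕜 := ℝ)).const_mul M).const_sub 1
        simpa using h3
      have hco := (Real.continuousAt_rpow_const 1 s (Or.inl one_ne_zero)).tendsto.comp h1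
      simpa [Real.one_rpow, Function.comp_def] using hco
    have hev1 : ∀ᶠ t : ℝ in atTop, (n : ℝ) / ((n : ℝ) + ε) < ((t - M) / t) ^ s :=
      htend.eventually (eventually_gt_nhds hc)
    filter_upwards [hev1, eventually_ge_atTop (M + 1)] with t h1 h2
    intro r hr
    have ht0 : (0 : ℝ) < t := by linarith
    have htM : (0 : ℝ) < t - M := by linarith
    have hts : (0 : ℝ) < t ^ s := Real.rpow_pos_of_pos ht0 _
    have htMs : (0 : ℝ) < (t - M) ^ s := Real.rpow_pos_of_pos htM _
    have hdiv : (n : ℝ) / ((n : ℝ) + ε) < (t - M) ^ s / t ^ s := by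
      rwa [Real.div_rpow htM.le ht0.le] at h1
    have hkey : (n : ℝ) / (t - M) ^ s ≤ ((n : ℝ) + ε) / t ^ s := by
      rw [div_le_div_iff₀ htMs hts]
      rw [div_lt_div_iff₀ (by linarith) hts] at hdiv
      linarith
    have hsum : (∑ i : Fin n, (max ‖r - rbar i‖ η) ^ (-s)) ≤ (n : ℝ) * (t - M) ^ (-s) := by
      calc (∑ i : Fin n, (max ‖r - rbar i‖ η) ^ (-s))
          ≤ ∑ _i : Fin n, (t - M) ^ (-s) := by
            refine Finset.sum_le_sum fun i _ => ?_
            refine Real.rpow_le_rpow_of_nonpos htM ?_ (neg_nonpos.mpr hs.le)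
            refine le_trans ?_ (le_max_left _ _)
            have hns := norm_sub_norm_le r (rbar i)
            have hmi := hMi i
            rw [hr] at hns
            linarith
        _ = (n : ℝ) * (t - M) ^ (-s) := by
            simp [Finset.sum_const, Finset.card_univ, nsmul_eq_mul]
    have hfin : -(((n : ℝ) + ε) / t ^ s) ≤ - ∑ i : Fin n, (max ‖r - rbar i‖ η) ^ (-s) := by
      have h3 : (n : ℝ) * (t - M) ^ (-s) = (n : ℝ) / (t - M) ^ s := by
        rw [Real.rpow_neg htM.le]; ring
      rw [h3] at hsum
      linarith [le_trans hsum hkey]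
    have hgoal := le_trans hfin (part1 r)
    push_cast
    calc -(((n : ℝ) + 1 - 1) + ε) / ‖r‖ ^ s
        = -(((n : ℝ) + ε) / t ^ s) := by rw [hr]; ring
      _ ≤ v r - E := hgoal
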